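/- Let j ≥ 1 be a natural number and let x = (k,d,m) be a nonzero element of M̄_n. Set d' = d/j, k' = k + (j−1)·min(0,d'), m' = m + (j−1)·max(0,d'). Then y = (k',d',m') is a well-defined nonzero element of M̄_n, the j-th power of y equals x, and y is the unique element of M̄_n whose j-th power equals x. Thus every nonzero element of M̄_n has a unique j-th root in M̄_n. -/

import Mathlib

noncomputable section

/-- Elements of the monoid: `none` is the zero element, `some (k, d, m)` a triple. -/
abbrev El := Option (ℝ × ℝ × ℝ)

/-- Membership in `M̄_n`. -/
def inM (n : ℕ) : El → Prop
  | none => True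
  | some (k, d, m) => 1 - min 0 d ≤ k ∧ k ≤ m ∧ m ≤ (n : ℝ) - max 0 d

/-- The product on `M̄_n`. -/
def mul : El → El → El
  | some (k, d, m), some (k', d', m') =>
      if max k (k' - d) ≤ min m (m' - d) then
        some (max k (k' - d), d + d', min m (m' - d))
      else none
  | _, _ => none

/-- The transpose (semigroup inverse). -/
def transp : El → El
  | none => none
  | some (k, d, m) => some (k + d, -d, m + d)

/-- The height function. -/
def height : El → ℝ
  | none => -1
  | some (k, _, m) => m - k

/-- `pw x j` is the `(j+1)`-st power of `x` (so `pw x 0 = x`). -/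
def pw (x : El) : ℕ → El
  | 0 => x
  | j + 1 => mul (pw x j) x

lemma pw_none (t : ℕ) : pw none t = none := by
  induction t with
  | zero => rfl
  | succ t ih => rw [pw, ih]; rfl

lemma max_aux (a e : ℝ) (t : ℕ) :
    max (a - (t:ℝ) * min 0 e) (a - ((t:ℝ) + 1) * e) = a - ((t:ℝ) + 1) * min 0 e := by
  rcases le_total 0 e with he | he
  · simp only [min_eq_left he, mul_zero, sub_zero]
    exact max_eq_left (by nlinarith [Nat.cast_nonneg (α := ℝ) t])
  · simp only [min_eq_right he]
    exact max_eq_right (by nlinarith [Nat.cast_nonneg (α := ℝ) t])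

lemma min_aux (b e : ℝ) (t : ℕ) :
    min (b - (t:ℝ) * max 0 e) (b - ((t:ℝ) + 1) * e) = b - ((t:ℝ) + 1) * max 0 e := by
  rcases le_total 0 e with he | he
  · simp only [max_eq_right he]
    exact min_eq_right (by nlinarith [Nat.cast_nonneg (α := ℝ) t])
  · simp only [max_eq_left he, mul_zero, sub_zero]
    exact min_eq_left (by nlinarith [Nat.cast_nonneg (α := ℝ) t])

lemma pw_some (a e b : ℝ) (t : ℕ)
    (h : a - (t:ℝ) * min 0 e ≤ b - (t:ℝ) * max 0 e) :
    pw (some (a, e, b)) t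
      = some (a - (t:ℝ) * min 0 e, ((t:ℝ) + 1) * e, b - (t:ℝ) * max 0 e) := by
  induction t with
  | zero => simp [pw]
  | succ t ih =>
    have ht : a - (t:ℝ) * min 0 e ≤ b - (t:ℝ) * max 0 e := by
      have h1 : min 0 e ≤ 0 := min_le_left 0 e
      have h2 : (0:ℝ) ≤ max 0 e := le_max_left 0 e
      push_cast at h
      linarith
    rw [pw, ih ht]
    show (if max (a - (t:ℝ) * min 0 e) (a - ((t:ℝ)+1) * e)
            ≤ min (b - (t:ℝ) * max 0 e) (b - ((t:ℝ)+1) * e) then _ else _) = _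
    rw [max_aux, min_aux, if_pos (by push_cast at h ⊢; linarith)]
    push_cast
    ring_nf

lemma pw_shape (a e b : ℝ) (t : ℕ) (p : ℝ × ℝ × ℝ)
    (h : pw (some (a, e, b)) t = some p) :
    p = (a - (t:ℝ) * min 0 e, ((t:ℝ) + 1) * e, b - (t:ℝ) * max 0 e) := by
  induction t generalizing p with
  | zero =>
    simp only [pw, Option.some.injEq] at h
    simp [← h]
  | succ t ih =>
    rw [pw] at h
    rcases hq : pw (some (a, e, b)) t with _ | q
    · rw [hq] at h; exact absurd h (by simp [mul])
    · rw [hq, ih q hq] at h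
      rw [show mul (some (a - (t:ℝ) * min 0 e, ((t:ℝ)+1) * e, b - (t:ℝ) * max 0 e))
            (some (a, e, b))
          = if max (a - (t:ℝ) * min 0 e) (a - ((t:ℝ)+1) * e)
              ≤ min (b - (t:ℝ) * max 0 e) (b - ((t:ℝ)+1) * e) then
              some (max (a - (t:ℝ) * min 0 e) (a - ((t:ℝ)+1) * e),
                ((t:ℝ)+1) * e + e,
                min (b - (t:ℝ) * max 0 e) (b - ((t:ℝ)+1) * e))
            else none from rfl, max_aux, min_aux] at h
      split_ifs at h with hc
      · simp only [Option.some.injEq] at h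
        rw [← h]
        push_cast
        ring_nf

/-- every nonzero x = (k,d,m) ∈ M̄_n has a unique j-th root
(j ≥ 1), namely y = (k + (j-1)·min(0,d/j), d/j, m + (j-1)·max(0,d/j)).
Here `pw y (j-1)` is the j-th power of y. -/
theorem stmt17 (n : ℕ) (hn : 2 ≤ n) (j : ℕ) (hj : 1 ≤ j) (k d m : ℝ)
    (hx : inM n (some (k, d, m))) :
    inM n (some (k + ((j : ℝ) - 1) * min 0 (d / (j : ℝ)), d / (j : ℝ),
      m + ((j : ℝ) - 1) * max 0 (d / (j : ℝ)))) ∧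
    pw (some (k + ((j : ℝ) - 1) * min 0 (d / (j : ℝ)), d / (j : ℝ),
      m + ((j : ℝ) - 1) * max 0 (d / (j : ℝ)))) (j - 1) = some (k, d, m) ∧
    (∀ y : El, inM n y → pw y (j - 1) = some (k, d, m) →
      y = some (k + ((j : ℝ) - 1) * min 0 (d / (j : ℝ)), d / (j : ℝ),
        m + ((j : ℝ) - 1) * max 0 (d / (j : ℝ)))) := by
  obtain ⟨h1, h2, h3⟩ := hx
  have hjr : (0:ℝ) < (j:ℝ) := by exact_mod_cast hj
  have hjne : (j:ℝ) ≠ 0 := ne_of_gt hjr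
  have hc : ((j - 1 : ℕ) : ℝ) = (j:ℝ) - 1 := by
    rw [Nat.cast_sub hj, Nat.cast_one]
  have hmin : (j:ℝ) * min 0 (d / (j:ℝ)) = min 0 d := by
    rcases le_total 0 d with hd | hd
    · rw [min_eq_left (div_nonneg hd hjr.le), min_eq_left hd, mul_zero]
    · rw [min_eq_right (div_nonpos_of_nonpos_of_nonneg hd hjr.le), min_eq_right hd,
        mul_div_cancel₀ _ hjne]
  have hmax : (j:ℝ) * max 0 (d / (j:ℝ)) = max 0 d := by
    rcases le_total 0 d with hd | hd
    · rw [max_eq_right (div_nonneg hd hjr.le), max_eq_right hd, mul_div_cancel₀ _ hjne]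
    · rw [max_eq_left (div_nonpos_of_nonpos_of_nonneg hd hjr.le), max_eq_left hd, mul_zero]
  have hminle : min 0 (d / (j:ℝ)) ≤ 0 := min_le_left _ _
  have hmaxge : (0:ℝ) ≤ max 0 (d / (j:ℝ)) := le_max_left _ _
  have hj1 : (0:ℝ) ≤ (j:ℝ) - 1 := by
    have : (1:ℝ) ≤ (j:ℝ) := by exact_mod_cast hj
    linarith
  have hmn : ((j:ℝ) - 1) * min 0 (d / (j:ℝ)) ≤ 0 :=
    mul_nonpos_of_nonneg_of_nonpos hj1 hminle
  have hmx : (0:ℝ) ≤ ((j:ℝ) - 1) * max 0 (d / (j:ℝ)) :=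
    mul_nonneg hj1 hmaxge
  refine ⟨⟨?_, ?_, ?_⟩, ?_, ?_⟩
  · nlinarith [min_le_left (0:ℝ) d]
  · linarith
  · nlinarith [le_max_left (0:ℝ) d]
  · rw [pw_some _ _ _ _ (by rw [hc]; ring_nf; linarith), hc]
    congr 1
    refine Prod.ext (by ring) (Prod.ext ?_ (by ring))
    show ((j:ℝ) - 1 + 1) * (d / (j:ℝ)) = d
    field_simp
    ring
  · rintro (_ | ⟨a, e, b⟩) hy hyp
    · rw [pw_none] at hyp; exact absurd hyp (by simp)
    · have hsh := pw_shape a e b (j - 1) (k, d, m) hyp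
      rw [hc] at hsh
      have hk := congrArg Prod.fst hsh
      have hd := congrArg (fun p : ℝ × ℝ × ℝ => p.2.1) hsh
      have hm := congrArg (fun p : ℝ × ℝ × ℝ => p.2.2) hsh
      simp only at hk hd hm
      have he : e = d / (j:ℝ) := by rw [hd]; field_simp; ring
      rw [← he]
      congr 1
      have ha : a = k + ((j:ℝ) - 1) * min 0 e := by linarith
      have hb : b = m + ((j:ℝ) - 1) * max 0 e := by linarith
      rw [ha, hb]
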